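/- Let f : ℝ → ℝ be C² with compact support, φ : ℝ → ℝ be C², and 0 ≤ ξ ≤ 1/4. Define the energy density along a null geodesic in flat space, T(λ) = (1−2ξ)(φ'(λ))² − 2ξ φ(λ) φ''(λ). Then ∫ T(λ) f(λ)² dλ ≥ −2ξ ∫ φ(λ)² (f'(λ))² dλ. -/

import Mathlib

open MeasureTheory

theorem stmt_2 (f φ : ℝ → ℝ) (hf : ContDiff ℝ 2 f) (hfc : HasCompactSupport f)
    (hφ : ContDiff ℝ 2 φ) (ξ : ℝ) (hξ0 : 0 ≤ ξ) (hξ1 : ξ ≤ 1/4)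
    (T : ℝ → ℝ)
    (hT : ∀ l, T l = (1 - 2*ξ) * (deriv φ l)^2 - 2 * ξ * φ l * deriv (deriv φ) l) :
    (∫ l : ℝ, T l * (f l)^2) ≥ -2 * ξ * ∫ l : ℝ, (φ l)^2 * (deriv f l)^2 := by
  -- basic regularity facts
  have hφ' : ContDiff ℝ 1 (deriv φ) := by
    have := (contDiff_succ_iff_deriv.mp (show ContDiff ℝ (1 + 1) φ by norm_num [hφ])).2.2
    exact this
  have hf' : ContDiff ℝ 1 (deriv f) := by
    have := (contDiff_succ_iff_deriv.mp (show ContDiff ℝ (1 + 1) f by norm_num [hf])).2.2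
    exact this
  have hφd : ∀ x, HasDerivAt φ (deriv φ x) x :=
    fun x => (hφ.differentiable two_ne_zero x).hasDerivAt
  have hφ'd : ∀ x, HasDerivAt (deriv φ) (deriv (deriv φ) x) x :=
    fun x => (hφ'.differentiable one_ne_zero x).hasDerivAt
  have hfd : ∀ x, HasDerivAt f (deriv f x) x :=
    fun x => (hf.differentiable two_ne_zero x).hasDerivAt
  have hφc : Continuous φ := hφ.continuous
  have hφ'c : Continuous (deriv φ) := hφ'.continuous
  have hφ''c : Continuous (deriv (deriv φ)) := hφ'.continuous_deriv le_rfl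
  have hfcont : Continuous f := hf.continuous
  have hf'c : Continuous (deriv f) := hf'.continuous
  -- the auxiliary function for integration by parts
  set g : ℝ → ℝ := fun l => φ l * deriv φ l * f l ^ 2 with hg
  have hgd : ∀ x, HasDerivAt g
      (deriv φ x * deriv φ x * f x ^ 2 + φ x * deriv (deriv φ) x * f x ^ 2
        + φ x * deriv φ x * (2 * f x * deriv f x)) x := by
    intro x
    have h2 : HasDerivAt (fun l => f l ^ 2) (2 * f x * deriv f x) x := by
      have := (hfd x).fun_pow 2
      simpa [mul_comm, mul_assoc, mul_left_comm] using this
    have := ((hφd x).fun_mul (hφ'd x)).fun_mul h2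
    exact this.congr_deriv (by ring)
  have hgderiv : ∀ x, deriv g x =
      deriv φ x * deriv φ x * f x ^ 2 + φ x * deriv (deriv φ) x * f x ^ 2
        + φ x * deriv φ x * (2 * f x * deriv f x) := fun x => (hgd x).deriv
  have hgC1 : ContDiff ℝ 1 g :=
    ((hφ.of_le one_le_two).mul hφ').mul ((hf.of_le one_le_two).pow 2)
  have hgc : HasCompactSupport g := by
    apply HasCompactSupport.mul_left
    apply HasCompactSupport.comp_left (g := fun t : ℝ => t ^ 2) hfc
    simp
  -- ∫ deriv g = 0
  have hDc : Continuous (deriv g) := hgC1.continuous_deriv le_rfl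
  have hDcs : HasCompactSupport (deriv g) := hgc.deriv
  have hDint : Integrable (deriv g) := hDc.integrable_of_hasCompactSupport hDcs
  have hIBP : (∫ l : ℝ, deriv g l) = 0 := by
    rw [← setIntegral_univ, ← Set.Iic_union_Ioi (a := (0:ℝ)),
      setIntegral_union (Set.Iic_disjoint_Ioi le_rfl) measurableSet_Ioi
        hDint.integrableOn hDint.integrableOn,
      hgc.integral_Iic_deriv_eq hgC1 0, hgc.integral_Ioi_deriv_eq hgC1 0]
    ring
  -- integrability of the two integrands
  have hfc2 : HasCompactSupport (fun l => f l ^ 2) := by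
    apply HasCompactSupport.comp_left (g := fun t : ℝ => t ^ 2) hfc
    simp
  have hTc : Continuous T := by
    have : Continuous fun l => (1 - 2*ξ) * (deriv φ l)^2 - 2 * ξ * φ l * deriv (deriv φ) l :=
      ((continuous_const.mul (hφ'c.pow 2)).sub
        (((continuous_const.mul hφc)).mul hφ''c))
    exact this.congr fun l => (hT l).symm
  have hAint : Integrable (fun l => T l * f l ^ 2) := by
    apply Continuous.integrable_of_hasCompactSupport (hTc.mul (hfcont.pow 2))
    exact hfc2.mul_left
  have hf'cs : HasCompactSupport fun l => (deriv f l) ^ 2 := by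
    apply HasCompactSupport.comp_left (g := fun t : ℝ => t ^ 2) hfc.deriv
    simp
  have hBint : Integrable (fun l => (φ l)^2 * (deriv f l)^2) := by
    apply Continuous.integrable_of_hasCompactSupport ((hφc.pow 2).mul (hf'c.pow 2))
    exact hf'cs.mul_left
  -- pointwise identity and nonnegativity
  have key : ∀ l, T l * f l ^ 2 + 2 * ξ * ((φ l)^2 * (deriv f l)^2) + 2 * ξ * deriv g l
      = (deriv φ l * f l + 2 * ξ * φ l * deriv f l) ^ 2
        + 2 * ξ * (1 - 2*ξ) * (φ l * deriv f l) ^ 2 := by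
    intro l
    rw [hT l, hgderiv l]
    ring
  have hnonneg : 0 ≤ ∫ l : ℝ, (T l * f l ^ 2 + 2 * ξ * ((φ l)^2 * (deriv f l)^2)
      + 2 * ξ * deriv g l) := by
    apply integral_nonneg
    intro l
    show (0:ℝ) ≤ T l * f l ^ 2 + 2 * ξ * ((φ l)^2 * (deriv f l)^2) + 2 * ξ * deriv g l
    have h1 : 0 ≤ (deriv φ l * f l + 2 * ξ * φ l * deriv f l) ^ 2 := sq_nonneg _
    have h2 : 0 ≤ 2 * ξ * (1 - 2*ξ) * (φ l * deriv f l) ^ 2 :=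
      mul_nonneg (by nlinarith) (sq_nonneg _)
    have h3 := key l
    linarith
  have e1 : (∫ l : ℝ, (T l * f l ^ 2 + 2 * ξ * ((φ l)^2 * (deriv f l)^2) + 2 * ξ * deriv g l))
      = (∫ l : ℝ, (T l * f l ^ 2 + 2 * ξ * ((φ l)^2 * (deriv f l)^2)))
        + ∫ l : ℝ, 2 * ξ * deriv g l :=
    integral_add (hAint.add (hBint.const_mul _)) (hDint.const_mul _)
  have e2 : (∫ l : ℝ, (T l * f l ^ 2 + 2 * ξ * ((φ l)^2 * (deriv f l)^2)))
      = (∫ l : ℝ, T l * f l ^ 2) + ∫ l : ℝ, 2 * ξ * ((φ l)^2 * (deriv f l)^2) :=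
    integral_add hAint (hBint.const_mul _)
  have e3 : (∫ l : ℝ, 2 * ξ * deriv g l) = 2 * ξ * ∫ l : ℝ, deriv g l := integral_const_mul _ _
  have e4 : (∫ l : ℝ, 2 * ξ * ((φ l)^2 * (deriv f l)^2))
      = 2 * ξ * ∫ l : ℝ, (φ l)^2 * (deriv f l)^2 := integral_const_mul _ _
  rw [e1, e2, e3, e4, hIBP] at hnonneg
  linarith
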